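/- If a tiling T of ℝⁿ is repetitive, then for every tiling T' in the continuous hull Ω_T, every patch of T appears (up to translation) in T'; consequently Ω_{T'} = Ω_T. -/
import Mathlib

/- Shared framework: tilings of ℝⁿ and the tiling inverse semigroup (Kellendonk),
   following Exel–Gonçalves–Starling. -/
open Set
open scoped Classical
noncomputable section

abbrev Rn (n : ℕ) := EuclideanSpace ℝ (Fin n)

/-- A prototile: a subset of ℝⁿ homeomorphic to the closed unit ball, carrying a label,
with the origin (the designated puncture) in its interior. -/
structure ProtoTile (n : ℕ) where
  carrier : Set (Rn n)
  label : ℕ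
  ball_like : Nonempty (carrier ≃ₜ (Metric.closedBall (0 : Rn n) 1 : Set (Rn n)))
  origin_mem : (0 : Rn n) ∈ interior carrier

/-- A tile: a translate `p + x` of a prototile `p`; `puncture` is the translation vector,
i.e. the designated point `x(t)` of the tile. -/
structure Tile (n : ℕ) where
  proto : ProtoTile n
  puncture : Rn n

namespace Tile

def carrier {n : ℕ} (t : Tile n) : Set (Rn n) := (fun y => y + t.puncture) '' t.proto.carrier

def translate {n : ℕ} (t : Tile n) (x : Rn n) : Tile n := ⟨t.proto, t.puncture + x⟩

end Tile

/-- `T + x`, the translate of a collection of tiles. -/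
def translateSet {n : ℕ} (T : Set (Tile n)) (x : Rn n) : Set (Tile n) :=
  (fun t => t.translate x) '' T

/-- A partial tiling: tiles with pairwise disjoint interiors. -/
def IsPartialTiling {n : ℕ} (T : Set (Tile n)) : Prop :=
  T.Pairwise fun t t' => interior t.carrier ∩ interior t'.carrier = ∅

/-- The support of a partial tiling. -/
def tsupport' {n : ℕ} (T : Set (Tile n)) : Set (Rn n) := ⋃ t ∈ T, t.carrier

/-- A tiling: a partial tiling whose support is all of ℝⁿ. -/
def IsTiling {n : ℕ} (T : Set (Tile n)) : Prop := IsPartialTiling T ∧ tsupport' T = univ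

/-- A patch: a finite partial tiling. -/
def IsPatch {n : ℕ} (P : Set (Tile n)) : Prop := IsPartialTiling P ∧ P.Finite

/-- `T(U)`: the tiles of `T` meeting the set `U`. -/
def tilesMeeting {n : ℕ} (T : Set (Tile n)) (U : Set (Rn n)) : Set (Tile n) :=
  {t | t ∈ T ∧ (t.carrier ∩ U).Nonempty}

/-- The tiling metric. -/
def tdist {n : ℕ} (T T' : Set (Tile n)) : ℝ :=
  sInf ({1} ∪ {ε : ℝ | 0 < ε ∧ ∃ x x' : Rn n, ‖x‖ < ε ∧ ‖x'‖ < ε ∧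
    tilesMeeting (translateSet T (-x)) (Metric.ball (0 : Rn n) (1/ε)) =
      tilesMeeting (translateSet T' (-x')) (Metric.ball (0 : Rn n) (1/ε))})

/-- Finite local complexity: for each `r > 0` there are only finitely many patches
`T(B(x,r))` up to translation. -/
def FLC {n : ℕ} (T : Set (Tile n)) : Prop :=
  ∀ r : ℝ, 0 < r → ∃ F : Set (Set (Tile n)), F.Finite ∧
    ∀ x : Rn n, ∃ P ∈ F, ∃ y : Rn n, tilesMeeting T (Metric.ball x r) = translateSet P y

/-- Repetitivity. -/
def Repetitive {n : ℕ} (T : Set (Tile n)) : Prop :=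
  ∀ P ⊆ T, IsPatch P → ∃ R : ℝ, 0 < R ∧ ∀ x : Rn n, ∃ y : Rn n,
    translateSet P y ⊆ tilesMeeting T (Metric.ball x R)

def IsPeriodic {n : ℕ} (T : Set (Tile n)) : Prop :=
  ∃ x : Rn n, x ≠ 0 ∧ translateSet T x = T

/-- The continuous hull `Ω_T`, characterized as the set of all tilings every patch of
which appears as a translate of a patch of `T`. -/
def hull {n : ℕ} (T : Set (Tile n)) : Set (Set (Tile n)) :=
  {T' | IsTiling T' ∧ ∀ P ⊆ T', IsPatch P → ∃ x : Rn n, translateSet P x ⊆ T}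

/-- Strong aperiodicity: the hull contains no periodic tiling. -/
def StronglyAperiodic {n : ℕ} (T : Set (Tile n)) : Prop := ∀ T' ∈ hull T, ¬ IsPeriodic T'

/-- The punctured hull: tilings of the hull with a puncture at the origin. -/
def puncturedHull {n : ℕ} (T : Set (Tile n)) : Set (Set (Tile n)) :=
  {T' | T' ∈ hull T ∧ ∃ t ∈ T', t.puncture = 0}

/-- `U(P,t) = {T' : P - x(t) ⊆ T'}`. -/
def U {n : ℕ} (P : Set (Tile n)) (t : Tile n) : Set (Set (Tile n)) :=
  {T' | translateSet P (-t.puncture) ⊆ T'}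

/-- The (tiling-metric) topology on the punctured hull: generated by the balls of `tdist`. -/
def punctopology {n : ℕ} (T : Set (Tile n)) : TopologicalSpace ↥(puncturedHull T) :=
  TopologicalSpace.generateFrom
    {V | ∃ T₀ ∈ puncturedHull T, ∃ ε : ℝ, 0 < ε ∧
      V = {T' : ↥(puncturedHull T) | tdist (T' : Set (Tile n)) T₀ < ε}}

/-- A representative `(t₁, P, t₂)` of a doubly-pointed pattern class of the tiling `T`:
`P` is a patch occurring in `T` whose support has connected interior, `t₁, t₂ ∈ P`. -/
structure SRep (n : ℕ) (T : Set (Tile n)) where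
  t1 : Tile n
  t2 : Tile n
  P : Set (Tile n)
  mem1 : t1 ∈ P
  mem2 : t2 ∈ P
  patch : IsPatch P
  conn : IsConnected (interior (tsupport' P))
  occurs : ∃ x : Rn n, translateSet P x ⊆ T

namespace SRep

variable {n : ℕ} {T : Set (Tile n)}

/-- The involution `[t₁,P,t₂]* = [t₂,P,t₁]`. -/
def star (s : SRep n T) : SRep n T := ⟨s.t2, s.t1, s.P, s.mem2, s.mem1, s.patch, s.conn, s.occurs⟩

/-- A representative of `s* s = [t₂,P,t₂]`. -/
def srcIdem (s : SRep n T) : SRep n T :=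
  ⟨s.t2, s.t2, s.P, s.mem2, s.mem2, s.patch, s.conn, s.occurs⟩

/-- A representative of `s s* = [t₁,P,t₁]`. -/
def ranIdem (s : SRep n T) : SRep n T :=
  ⟨s.t1, s.t1, s.P, s.mem1, s.mem1, s.patch, s.conn, s.occurs⟩

/-- Two triples represent the same doubly-pointed pattern class. -/
def Equiv' (a b : SRep n T) : Prop :=
  ∃ x : Rn n, a.t1.translate x = b.t1 ∧ a.t2.translate x = b.t2 ∧ translateSet a.P x = b.P

/-- The product `[t₁,P,t₂][t₁',P',t₂']` is nonzero: there are translations making both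
patches of `T` with `t₂ + x = t₁' + x'`. -/
def Compat (a b : SRep n T) : Prop :=
  ∃ x x' : Rn n, translateSet a.P x ⊆ T ∧ translateSet b.P x' ⊆ T ∧
    a.t2.translate x = b.t1.translate x'

/-- `c` represents the (nonzero) product of the classes of `a` and `b`:
`[t₁+x, (P+x) ∪ (P'+x'), t₂'+x']`. -/
def Prod' (a b c : SRep n T) : Prop :=
  ∃ x x' : Rn n, translateSet a.P x ⊆ T ∧ translateSet b.P x' ⊆ T ∧
    a.t2.translate x = b.t1.translate x' ∧
    ∃ y : Rn n, c.t1.translate y = a.t1.translate x ∧ c.t2.translate y = b.t2.translate x' ∧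
      translateSet c.P y = translateSet a.P x ∪ translateSet b.P x'

/-- The natural order on idempotent classes, concretely: `e ≤ f` iff for suitable
representatives `t = t'` and `P' ⊆ P`. -/
def le (e f : SRep n T) : Prop :=
  ∃ x : Rn n, f.t1.translate x = e.t1 ∧ translateSet f.P x ⊆ e.P

end SRep

/-- `g` represents `s* e s`. -/
def Prod3 {n : ℕ} {T : Set (Tile n)} (s e g : SRep n T) : Prop :=
  ∃ a : SRep n T, SRep.Prod' (SRep.star s) e a ∧ SRep.Prod' a s g

/-- A filter in the idempotent semilattice `E` of the tiling inverse semigroup, encoded as a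
translation-saturated set of idempotent representatives: nonempty, upward closed and downward
directed (zero is excluded automatically since only nonzero idempotents have representatives). -/
def IsFilterE {n : ℕ} (T : Set (Tile n)) (ξ : Set (SRep n T)) : Prop :=
  ξ.Nonempty ∧ (∀ e ∈ ξ, e.t1 = e.t2) ∧
  (∀ e ∈ ξ, ∀ f : SRep n T, f.t1 = f.t2 → SRep.le e f → f ∈ ξ) ∧
  (∀ e ∈ ξ, ∀ f ∈ ξ, ∃ g ∈ ξ, SRep.le g e ∧ SRep.le g f)

/-- An ultrafilter: a maximal filter. -/
def IsUltraE {n : ℕ} (T : Set (Tile n)) (ξ : Set (SRep n T)) : Prop :=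
  IsFilterE T ξ ∧ ∀ ζ : Set (SRep n T), IsFilterE T ζ → ξ ⊆ ζ → ζ = ξ

/-- `ξ_{T₀} = {[t,P,t] : t = T₀(0), t ∈ P ⊆ T₀}`: the idempotents whose patch, positioned with
its distinguished tile having puncture at the origin, lies in `T₀`. -/
def xiOf {n : ℕ} (T : Set (Tile n)) (T₀ : Set (Tile n)) : Set (SRep n T) :=
  {e | e.t1 = e.t2 ∧ ∃ x : Rn n, (e.t1.translate x).puncture = 0 ∧
    e.t1.translate x ∈ T₀ ∧ translateSet e.P x ⊆ T₀}

/-- The partial tiling `⋃ {P : [t,P,t] ∈ ξ}` associated to a filter (each patch positioned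
with the puncture of its distinguished tile at the origin). -/
def tilingOf {n : ℕ} {T : Set (Tile n)} (ξ : Set (SRep n T)) : Set (Tile n) :=
  ⋃ e ∈ ξ, translateSet e.P (-(e.t1.puncture))

/-- A character of the idempotent semilattice `E`: nonzero, constant on classes,
multiplicative, and vanishing on zero products. -/
def IsCharE {n : ℕ} (T : Set (Tile n)) (φ : SRep n T → Bool) : Prop :=
  (∃ e, φ e = true) ∧
  (∀ e f : SRep n T, SRep.Equiv' e f → φ e = φ f) ∧
  (∀ e f g : SRep n T, e.t1 = e.t2 → f.t1 = f.t2 → SRep.Prod' e f g → φ g = (φ e && φ f)) ∧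
  (∀ e f : SRep n T, e.t1 = e.t2 → f.t1 = f.t2 → ¬ SRep.Compat e f →
    ¬(φ e = true ∧ φ f = true))

/-- The character `φ_{T₀}` of a tiling `T₀` of the punctured hull. -/
def charOf {n : ℕ} (T : Set (Tile n)) (T₀ : Set (Tile n)) : SRep n T → Bool :=
  fun e => decide (e ∈ xiOf T T₀)

/-- A point `(s, T')` of the set `Y`: `T' ∈ Ω_punc` lies in the domain `U(P,t₂)` of `θ_s`. -/
structure GermPt (n : ℕ) (T : Set (Tile n)) where
  s : SRep n T
  tl : Set (Tile n)
  mem_hull : tl ∈ puncturedHull T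
  mem_dom : tl ∈ U s.P s.t2

/-- The germ relation: `(s,T') ∼ (s'',T'')` iff `T' = T''` and there is an idempotent
`e = [t,P'',t]` with `T' ∈ U(P'',t)` and `s e = s'' e` (as classes). -/
def GermRel {n : ℕ} (T : Set (Tile n)) (p q : GermPt n T) : Prop :=
  p.tl = q.tl ∧ ∃ e : SRep n T, e.t1 = e.t2 ∧ p.tl ∈ U e.P e.t1 ∧
    ∃ g h : SRep n T, SRep.Prod' p.s e g ∧ SRep.Prod' q.s e h ∧ SRep.Equiv' g h

/-- The germ topology on the groupoid of germs: basic open sets `Θ(s,V)` for `V` an open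
subset of `U(P,t₂)`. -/
def germTop {n : ℕ} (T : Set (Tile n)) : TopologicalSpace (Quot (GermRel T)) :=
  TopologicalSpace.generateFrom
    {W | ∃ (s : SRep n T) (V : Set (Set (Tile n))),
      (letI := punctopology T;
        IsOpen {T' : ↥(puncturedHull T) | (T' : Set (Tile n)) ∈ V}) ∧
      V ⊆ U s.P s.t2 ∧
      W = {g | ∃ p : GermPt n T, p.s = s ∧ p.tl ∈ V ∧ Quot.mk (GermRel T) p = g}}

/-- `R_punc`: pairs `(T' + x, T')` of punctured-hull tilings which are translates. -/
def RpuncSet {n : ℕ} (T : Set (Tile n)) : Set (Set (Tile n) × Set (Tile n)) :=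
  {q | q.1 ∈ puncturedHull T ∧ q.2 ∈ puncturedHull T ∧ ∃ x : Rn n, q.1 = translateSet q.2 x}

/-- The topology `R_punc` inherits from `Ω_punc × ℝⁿ`. -/
def rpuncTop {n : ℕ} (T : Set (Tile n)) : TopologicalSpace ↥(RpuncSet T) :=
  letI := punctopology T
  TopologicalSpace.induced
    (fun q : ↥(RpuncSet T) =>
      ((⟨q.val.2, q.property.2.1⟩ : ↥(puncturedHull T)), Classical.choose q.property.2.2))
    inferInstance


section Helpers

open Metric Bornology

variable {n : ℕ}

lemma tile_translate_translate (t : Tile n) (a b : Rn n) :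
    (t.translate a).translate b = t.translate (a + b) := by
  simp [Tile.translate, add_assoc]

lemma translateSet_translateSet (P : Set (Tile n)) (a b : Rn n) :
    translateSet (translateSet P a) b = translateSet P (a + b) := by
  simp only [translateSet, Set.image_image]
  exact Set.image_congr fun t _ => tile_translate_translate t a b

lemma carrier_translate (t : Tile n) (x : Rn n) :
    (t.translate x).carrier = (fun y => y + x) '' t.carrier := by
  simp only [Tile.carrier, Tile.translate, Set.image_image, add_assoc]

lemma image_add_interior (s : Set (Rn n)) (x : Rn n) :
    interior ((fun y => y + x) '' s) = (fun y => y + x) '' interior s := by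
  have h : (fun y : Rn n => y + x) = ⇑(Homeomorph.addRight x) := rfl
  rw [h, (Homeomorph.addRight x).image_interior]

lemma interior_carrier_translate (t : Tile n) (x : Rn n) :
    interior (t.translate x).carrier = (fun y => y + x) '' interior t.carrier := by
  rw [carrier_translate, image_add_interior]

lemma puncture_mem_interior (t : Tile n) : t.puncture ∈ interior t.carrier := by
  have h : t.carrier = (fun y => y + t.puncture) '' t.proto.carrier := rfl
  rw [h, image_add_interior]
  exact ⟨0, t.proto.origin_mem, zero_add _⟩

lemma carrier_compact (t : Tile n) : IsCompact t.carrier := by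
  obtain ⟨h⟩ := t.proto.ball_like
  have h1 : IsCompact (Metric.closedBall (0 : Rn n) 1) := isCompact_closedBall _ _
  have h2 : CompactSpace (Metric.closedBall (0 : Rn n) 1 : Set (Rn n)) :=
    isCompact_iff_compactSpace.mp h1
  have h3 : CompactSpace t.proto.carrier := h.symm.compactSpace
  have h4 : IsCompact t.proto.carrier := isCompact_iff_compactSpace.mpr h3
  exact h4.image (continuous_id.add continuous_const)

lemma isPatch_translate {P : Set (Tile n)} (h : IsPatch P) (x : Rn n) :
    IsPatch (translateSet P x) := by
  constructor
  · rintro _ ⟨a, ha, rfl⟩ _ ⟨b, hb, rfl⟩ hab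
    have hab' : a ≠ b := by rintro rfl; exact hab rfl
    rw [interior_carrier_translate, interior_carrier_translate,
      ← Set.image_inter (add_left_injective x), h.1 ha hb hab', Set.image_empty]
  · exact h.2.image _

lemma dense_interiors {T' : Set (Tile n)} (h : IsTiling T') :
    Dense (⋃ t ∈ T', interior t.carrier) := by
  have hcount : T'.Countable := by
    refine Set.PairwiseDisjoint.countable_of_isOpen
      (s := fun t : Tile n => interior t.carrier) (a := T') ?_ (fun t _ => isOpen_interior)
      (fun t _ => ⟨t.puncture, puncture_mem_interior t⟩)
    intro a ha b hb hab
    exact Set.disjoint_iff_inter_eq_empty.mpr (h.1 ha hb hab)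
  refine dense_biUnion_interior_of_closed (fun t _ => (carrier_compact t).isClosed) hcount ?_
  exact h.2

end Helpers

/-- If a tiling `T` of ℝⁿ is repetitive, then every tiling `T'` of the continuous hull of
`T` contains a translate of every patch of `T`; consequently the hulls coincide:
`Ω_{T'} = Ω_T`. -/
theorem repetitive_hull_minimal {n : ℕ} (T : Set (Tile n)) (hT : IsTiling T)
    (hrep : Repetitive T) :
    ∀ T' ∈ hull T,
      (∀ P ⊆ T, IsPatch P → ∃ x : Rn n, translateSet P x ⊆ T') ∧ hull T' = hull T := by
  intro T' hT'
  obtain ⟨hT't, hT'emb⟩ := hT'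
  have claim1 : ∀ P ⊆ T, IsPatch P → ∃ x : Rn n, translateSet P x ⊆ T' := by
    intro P hPT hP
    rcases P.eq_empty_or_nonempty with rfl | hPne
    · exact ⟨0, by simp [translateSet]⟩
    obtain ⟨R, hR, hrepP⟩ := hrep P hPT hP
    -- inner radius and outer radius data for each tile
    have specι : ∀ t : Tile n, ∃ ε : ℝ, 0 < ε ∧
        Metric.ball t.puncture ε ⊆ interior t.carrier :=
      fun t => Metric.isOpen_iff.mp isOpen_interior _ (puncture_mem_interior t)
    have specD : ∀ t : Tile n, ∃ d : ℝ, 0 ≤ d ∧ t.carrier ⊆ Metric.closedBall t.puncture d := by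
      intro t
      obtain ⟨r, hr⟩ := (carrier_compact t).isBounded.subset_closedBall t.puncture
      exact ⟨max r 0, le_max_right _ _,
        hr.trans (Metric.closedBall_subset_closedBall (le_max_left _ _))⟩
    set f : Tile n → ℝ := fun t => Classical.choose (specι t) with hfdef
    have hf : ∀ t : Tile n, 0 < f t ∧ Metric.ball t.puncture (f t) ⊆ interior t.carrier :=
      fun t => Classical.choose_spec (specι t)
    set g : Tile n → ℝ := fun t => Classical.choose (specD t) with hgdef
    have hg : ∀ t : Tile n, 0 ≤ g t ∧ t.carrier ⊆ Metric.closedBall t.puncture (g t) :=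
      fun t => Classical.choose_spec (specD t)
    have hPfinne : hP.2.toFinset.Nonempty := by
      obtain ⟨t, ht⟩ := hPne
      exact ⟨t, hP.2.mem_toFinset.mpr ht⟩
    set ι : ℝ := hP.2.toFinset.inf' hPfinne f with hιdef
    set D : ℝ := hP.2.toFinset.sup' hPfinne g with hDdef
    have hι : 0 < ι := by
      rw [hιdef, Finset.lt_inf'_iff]
      exact fun t _ => (hf t).1
    have hιle : ∀ t ∈ P, ι ≤ f t :=
      fun t ht => Finset.inf'_le f (hP.2.mem_toFinset.mpr ht)
    have hDle : ∀ t ∈ P, g t ≤ D :=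
      fun t ht => Finset.le_sup' g (hP.2.mem_toFinset.mpr ht)
    -- density of interiors of T' tiles; choose witnesses near every point
    have hdense : Dense (⋃ t ∈ T', interior t.carrier) := dense_interiors hT't
    have hw : ∀ c : Rn n, ∃ w : Rn n, ∃ s' : Tile n, s' ∈ T' ∧
        w ∈ Metric.ball c ι ∧ w ∈ interior s'.carrier := by
      intro c
      obtain ⟨w, hw1, hw2⟩ := hdense.exists_mem_open Metric.isOpen_ball
        ⟨c, Metric.mem_ball_self hι⟩
      obtain ⟨s', hs', hws'⟩ := Set.mem_iUnion₂.mp hw1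
      exact ⟨w, s', hs', hw2, hws'⟩
    choose w s' hs'T hwball hwint using hw
    -- finite subcover of the big closed ball
    have hcov : ∀ c ∈ Metric.closedBall (0 : Rn n) (R + D),
        Metric.ball c (ι - dist (w c) c) ∈ nhds c := by
      intro c _
      exact Metric.ball_mem_nhds c (by
        have := Metric.mem_ball.mp (hwball c)
        linarith)
    obtain ⟨F, hFcov⟩ :=
      (isCompact_closedBall (0 : Rn n) (R + D)).elim_nhds_subcover
        (fun c => Metric.ball c (ι - dist (w c) c)) hcov
    set Q : Set (Tile n) := (fun c => s' c) '' (F : Set (Rn n)) with hQdef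
    have hQsub : Q ⊆ T' := by rintro _ ⟨c, _, rfl⟩; exact hs'T c
    have hQpatch : IsPatch Q := ⟨hT't.1.mono hQsub, F.finite_toSet.image _⟩
    obtain ⟨z, hz⟩ := hT'emb Q hQsub hQpatch
    obtain ⟨y, hy⟩ := hrepP z
    refine ⟨y - z, ?_⟩
    rintro _ ⟨t, htP, rfl⟩
    have hτ : t.translate y ∈ tilesMeeting T (Metric.ball z R) := hy ⟨t, htP, rfl⟩
    have hτT : t.translate y ∈ T := hτ.1
    obtain ⟨p, hpc, hpb⟩ := hτ.2
    -- the puncture of the copy of t is in the big ball around z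
    have hdistpc : dist p (t.puncture + y) ≤ D := by
      rw [carrier_translate] at hpc
      obtain ⟨p₀, hp₀, rfl⟩ := hpc
      have h1 : dist p₀ t.puncture ≤ g t := Metric.mem_closedBall.mp ((hg t).2 hp₀)
      have h2 : dist (p₀ + y) (t.puncture + y) = dist p₀ t.puncture := dist_add_right _ _ _
      rw [h2]; exact h1.trans (hDle t htP)
    have hcball : t.puncture + y - z ∈ Metric.closedBall (0 : Rn n) (R + D) := by
      have h2 : dist p z < R := Metric.mem_ball.mp hpb
      have h3 : dist (t.puncture + y) z ≤ dist (t.puncture + y) p + dist p z := dist_triangle _ _ _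
      rw [dist_comm] at hdistpc
      have : dist (t.puncture + y - z) 0 = dist (t.puncture + y) z := by
        rw [dist_eq_norm, dist_eq_norm, sub_zero]
      rw [Metric.mem_closedBall, this]
      linarith
    obtain ⟨c, hcF, hcb⟩ := Set.mem_iUnion₂.mp (hFcov.2 hcball)
    -- w c + z lies in the interior of both tiles
    have hwc : dist (w c) (t.puncture + y - z) < ι := by
      have h1 : dist (w c) c < ι - dist (w c) c + dist (w c) c := by
        have := Metric.mem_ball.mp (hwball c); linarith [dist_nonneg (x := w c) (y := c)]
      have h2 : dist (t.puncture + y - z) c < ι - dist (w c) c := Metric.mem_ball.mp hcb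
      calc dist (w c) (t.puncture + y - z) ≤ dist (w c) c + dist c (t.puncture + y - z) :=
            dist_triangle _ _ _
        _ < dist (w c) c + (ι - dist (w c) c) := by rw [dist_comm c]; linarith
        _ = ι := by ring
    have hmem1 : w c + z ∈ interior (t.translate y).carrier := by
      rw [interior_carrier_translate]
      refine ⟨w c + z - y, ?_, by abel⟩
      apply (hf t).2
      have hb : dist (w c + z - y) t.puncture < ι := by
        have : dist (w c + z - y) t.puncture = dist (w c) (t.puncture + y - z) := by
          rw [dist_eq_norm, dist_eq_norm]
          congr 1
          abel
        rw [this]; exact hwc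
      exact Metric.mem_ball.mpr (lt_of_lt_of_le hb (hιle t htP))
    have hmem2 : w c + z ∈ interior ((s' c).translate z).carrier := by
      rw [interior_carrier_translate]
      exact ⟨w c, hwint c, rfl⟩
    have hsT : (s' c).translate z ∈ T := hz ⟨s' c, ⟨c, hcF, rfl⟩, rfl⟩
    have heq : t.translate y = (s' c).translate z := by
      by_contra hne
      have h0 : interior (t.translate y).carrier ∩ interior ((s' c).translate z).carrier = ∅ :=
        hT.1 hτT hsT hne
      exact Set.eq_empty_iff_forall_notMem.mp h0 (w c + z) ⟨hmem1, hmem2⟩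
    have hfin : t.translate (y - z) = s' c := by
      have h1 := congrArg Tile.proto heq
      have h2 := congrArg Tile.puncture heq
      simp only [Tile.translate] at h1 h2
      have h3 : t.puncture + (y - z) = (s' c).puncture := by
        have h4 : t.puncture + y - z = (s' c).puncture := by rw [h2]; abel
        rw [← h4]; abel
      show (⟨t.proto, t.puncture + (y - z)⟩ : Tile n) = s' c
      rw [h1, h3]
    show t.translate (y - z) ∈ T'
    rw [hfin]
    exact hQsub ⟨c, hcF, rfl⟩
  refine ⟨claim1, ?_⟩
  ext T''
  constructor
  · rintro ⟨hT''t, hT''p⟩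
    refine ⟨hT''t, fun P hPsub hPpatch => ?_⟩
    obtain ⟨x, hx⟩ := hT''p P hPsub hPpatch
    obtain ⟨x', hx'⟩ := hT'emb (translateSet P x) hx (isPatch_translate hPpatch x)
    exact ⟨x + x', by rw [← translateSet_translateSet]; exact hx'⟩
  · rintro ⟨hT''t, hT''p⟩
    refine ⟨hT''t, fun P hPsub hPpatch => ?_⟩
    obtain ⟨x, hx⟩ := hT''p P hPsub hPpatch
    obtain ⟨x', hx'⟩ := claim1 (translateSet P x) hx (isPatch_translate hPpatch x)
    exact ⟨x + x', by rw [← translateSet_translateSet]; exact hx'⟩
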